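/- Let ψ, φ : ℝ² → ℝ be Schwartz functions and set u = ∇^⊥ψ. Then the commutator representation of the SQG nonlinear flux holds: 2 ∫_{ℝ²} (Λψ)(x) (u(x)·∇φ(x)) dx = ∫_{ℝ²} ψ(x) [ Λ(∇φ·u)(x) − ∇φ(x)·(∇^⊥Λψ)(x) ] dx, i.e. (θ R^⊥θ, ∇φ)_{L²} = ½ ∫ (Λ^{−1}θ) [Λ, ∇φ]·R^⊥θ dx with θ = Λψ. -/

import Mathlib

open MeasureTheory Filter Topology Real Set
open scoped RealInnerProductSpace
noncomputable section

/-- The plane, with its Euclidean structure. -/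
abbrev E2 : Type := EuclideanSpace ℝ (Fin 2)

/-- Partial derivative `∂ᵢ g` at `x`. -/
def pd (i : Fin 2) (g : E2 → ℝ) (x : E2) : ℝ := fderiv ℝ g x (EuclideanSpace.single i 1)

/-- Laplacian `Δ g` at `x`. -/
def lap (g : E2 → ℝ) (x : E2) : ℝ := ∑ i : Fin 2, pd i (pd i g) x

/-- Perpendicular gradient `∇^⊥ψ = (−∂₂ψ, ∂₁ψ)`. -/
def gradPerp (ψ : E2 → ℝ) (x : E2) : Fin 2 → ℝ := ![-(pd 1 ψ x), pd 0 ψ x]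

/-- The Fourier transform `ĝ(ξ) = ∫ e^{−i x·ξ} g(x) dx` of `g : ℝ² → ℝ`. -/
def ft (g : E2 → ℝ) (ξ : E2) : ℂ :=
  ∫ x : E2, Complex.exp (-Complex.I * ((⟪x, ξ⟫ : ℝ) : ℂ)) * (g x : ℂ)

/-- `L` is the half-Laplacian `Λ = (−Δ)^{1/2}` of `g`, defined on the Fourier side by
`Λg(x) = (2π)^{−2} ∫ e^{i x·ξ} |ξ| ĝ(ξ) dξ`. -/
def IsFourierHalfLap (g L : E2 → ℝ) : Prop :=
  ∀ x : E2, (L x : ℂ)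
    = ((((2 * π)^2)⁻¹ : ℝ) : ℂ)
        * ∫ ξ : E2, Complex.exp (Complex.I * ((⟪x, ξ⟫ : ℝ) : ℂ)) * (‖ξ‖ : ℂ) * ft g ξ

/- ### Auxiliary material for the proof -/

namespace Resnick

open SchwartzMap
open scoped FourierTransform

local notation "𝕊" => SchwartzMap E2 ℝ

lemma twopi_pos : (0:ℝ) < 2 * π := by positivity

lemma schwartz_temperate (g : 𝕊) : Function.HasTemperateGrowth ⇑g := by
  refine ⟨g.smooth', fun n => ?_⟩
  obtain ⟨C, hC, h⟩ := g.decay 0 n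
  refine ⟨0, C, fun x => ?_⟩
  have := h x
  simpa using this

/-- Complexification of a real Schwartz function. -/
def toC (f : 𝕊) : SchwartzMap E2 ℂ :=
  SchwartzMap.bilinLeftCLM (ContinuousLinearMap.lsmul ℝ ℝ : ℝ →L[ℝ] ℂ →L[ℝ] ℂ)
    (Function.HasTemperateGrowth.const (1:ℂ)) f

@[simp] lemma toC_apply (f : 𝕊) (x : E2) : toC f x = (f x : ℂ) := by
  have : toC f x = (f x) • (1:ℂ) := rfl
  simp [this, Complex.real_smul]

def pdS (i : Fin 2) (f : 𝕊) : 𝕊 := LineDeriv.lineDerivOpCLM ℝ 𝕊 (EuclideanSpace.single i (1:ℝ) : E2) f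

@[simp] lemma pdS_apply (i : Fin 2) (f : 𝕊) (x : E2) : pdS i f x = pd i (⇑f) x := rfl

def mulS (f g : 𝕊) : 𝕊 :=
  SchwartzMap.bilinLeftCLM (ContinuousLinearMap.mul ℝ ℝ) (schwartz_temperate g) f

@[simp] lemma mulS_apply (f g : 𝕊) (x : E2) : mulS f g x = f x * g x := rfl

/-- The Fourier transform as a Schwartz map. -/
def FTc (f : 𝕊) : SchwartzMap E2 ℂ := SchwartzMap.fourierTransformCLM ℂ (toC f)

lemma ft_eq (f : 𝕊) (ξ : E2) : ft ⇑f ξ = FTc f ((2*π)⁻¹ • ξ) := by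
  rw [FTc, SchwartzMap.fourierTransformCLM_apply, SchwartzMap.fourier_coe,
    Real.fourier_eq']
  unfold ft
  congr 1
  funext x
  rw [toC_apply, smul_eq_mul, real_inner_smul_right]
  congr 1
  have h : -2 * π * ((2*π)⁻¹ * ⟪x, ξ⟫) = -⟪x, ξ⟫ := by
    have h2 : (2*π) * (2*π)⁻¹ = 1 := mul_inv_cancel₀ (ne_of_gt twopi_pos)
    calc -2 * π * ((2*π)⁻¹ * ⟪x, ξ⟫) = -(((2*π) * (2*π)⁻¹) * ⟪x, ξ⟫) := by ring
      _ = -⟪x, ξ⟫ := by rw [h2, one_mul]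
  rw [h]
  push_cast
  ring

lemma ft_cont (f : 𝕊) : Continuous (ft ⇑f) := by
  have : ft ⇑f = fun ξ => FTc f ((2*π)⁻¹ • ξ) := funext (ft_eq f)
  rw [this]
  exact (FTc f).continuous.comp (continuous_const_smul _)

lemma ft_int_pow (f : 𝕊) (k : ℕ) : Integrable (fun ξ : E2 => ‖ξ‖^k * ‖ft ⇑f ξ‖) := by
  have h0 : Integrable (fun ξ : E2 => ‖ξ‖^k * ‖FTc f ξ‖) := (FTc f).integrable_pow_mul volume k
  have hne : ((2*π)⁻¹ : ℝ) ≠ 0 := by positivity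
  have h1 := (h0.comp_smul (R := (2*π)⁻¹) hne).const_mul ((2*π)^k)
  refine h1.congr (Filter.Eventually.of_forall fun ξ => ?_)
  dsimp only
  rw [ft_eq]
  have hn : ‖((2*π)⁻¹ : ℝ) • ξ‖ = (2*π)⁻¹ * ‖ξ‖ := by
    rw [norm_smul, Real.norm_eq_abs, abs_of_pos (by positivity)]
  rw [hn]
  have hcan : ((2*π:ℝ))^k * ((2*π)⁻¹)^k = 1 := by
    rw [← mul_pow, mul_inv_cancel₀ (ne_of_gt twopi_pos), one_pow]
  calc (2*π)^k * (((2*π)⁻¹ * ‖ξ‖)^k * ‖FTc f ((2*π)⁻¹ • ξ)‖)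
      = ((2*π)^k * ((2*π)⁻¹)^k) * (‖ξ‖^k * ‖FTc f ((2*π)⁻¹ • ξ)‖) := by
        rw [mul_pow]; ring
    _ = ‖ξ‖^k * ‖FTc f ((2*π)⁻¹ • ξ)‖ := by rw [hcan, one_mul]

/-- The kernel `e^{i x·ξ}`. -/
def ker (x ξ : E2) : ℂ := Complex.exp (((⟪x, ξ⟫ : ℝ) : ℂ) * Complex.I)

@[simp] lemma norm_ker (x ξ : E2) : ‖ker x ξ‖ = 1 := Complex.norm_exp_ofReal_mul_I _

lemma ker_cont : Continuous fun p : E2 × E2 => ker p.1 p.2 := by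
  apply Complex.continuous_exp.comp
  exact (Complex.continuous_ofReal.comp (continuous_fst.inner continuous_snd)).mul
    continuous_const

lemma ker_cont_right (x : E2) : Continuous fun ξ => ker x ξ := by
  apply Complex.continuous_exp.comp
  exact (Complex.continuous_ofReal.comp (continuous_const.inner continuous_id)).mul
    continuous_const

lemma ker_cont_left (ξ : E2) : Continuous fun x => ker x ξ := by
  apply Complex.continuous_exp.comp
  exact (Complex.continuous_ofReal.comp (continuous_id.inner continuous_const)).mul
    continuous_const

/-- `ft g (-ξ)` as an integral against `ker`. -/
lemma ft_neg_eq (g : E2 → ℝ) (ξ : E2) :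
    ft g (-ξ) = ∫ x : E2, ker x ξ * (g x : ℂ) := by
  unfold ft ker
  congr 1
  funext x
  rw [inner_neg_right]
  congr 2
  push_cast
  ring

def Kf (f : 𝕊) (ξ : E2) : ℂ := (‖ξ‖ : ℂ) * ft ⇑f ξ

lemma norm_Kf (f : 𝕊) (ξ : E2) : ‖Kf f ξ‖ = ‖ξ‖ * ‖ft ⇑f ξ‖ := by
  rw [Kf, norm_mul, Complex.norm_real, Real.norm_eq_abs, abs_norm]

lemma Kf_cont (f : 𝕊) : Continuous (Kf f) :=
  (Complex.continuous_ofReal.comp continuous_norm).mul (ft_cont f)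

lemma Kf_int (f : 𝕊) : Integrable (Kf f) := by
  refine ((ft_int_pow f 1).mono' (Kf_cont f).aestronglyMeasurable ?_)
  filter_upwards with ξ
  rw [norm_Kf, pow_one]

lemma norm_Kf_int (f : 𝕊) : Integrable fun ξ : E2 => ‖ξ‖ * ‖Kf f ξ‖ := by
  refine (ft_int_pow f 2).congr (Filter.Eventually.of_forall fun ξ => ?_)
  dsimp only
  rw [norm_Kf, sq]
  ring

/-- The multiplier appearing in the derivative of the half-Laplacian. -/
def Wd (i : Fin 2) (f : 𝕊) (ξ : E2) : ℂ :=
  ((⟪ξ, EuclideanSpace.single i 1⟫ : ℝ) : ℂ) * Complex.I * Kf f ξ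

lemma Wd_cont (i : Fin 2) (f : 𝕊) : Continuous (Wd i f) :=
  (((Complex.continuous_ofReal.comp
      (continuous_id.inner continuous_const)).mul
        continuous_const).mul (Kf_cont f))

lemma norm_Wd_le (i : Fin 2) (f : 𝕊) (ξ : E2) : ‖Wd i f ξ‖ ≤ ‖ξ‖ * ‖Kf f ξ‖ := by
  rw [Wd, norm_mul, norm_mul, Complex.norm_I, mul_one, Complex.norm_real]
  gcongr
  have := abs_real_inner_le_norm ξ (EuclideanSpace.single i 1 : E2)
  simpa [EuclideanSpace.norm_single] using this

lemma Wd_int (i : Fin 2) (f : 𝕊) : Integrable (Wd i f) :=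
  (norm_Kf_int f).mono' (Wd_cont i f).aestronglyMeasurable
    (Filter.Eventually.of_forall (norm_Wd_le i f))

/- ### Integrals of `ker x ξ * W ξ` -/

section W
variable {W : E2 → ℂ}

lemma intK_cont (hWc : Continuous W) (hWi : Integrable W) :
    Continuous fun x : E2 => ∫ ξ : E2, ker x ξ * W ξ := by
  refine continuous_of_dominated (bound := fun ξ => ‖W ξ‖)
    (fun x => ((ker_cont_right x).mul hWc).aestronglyMeasurable) ?_ hWi.norm ?_
  · intro x
    filter_upwards with ξ
    rw [norm_mul, norm_ker, one_mul]
  · filter_upwards with ξ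
    exact (ker_cont_left ξ).mul continuous_const

lemma intK_bound (x : E2) : ‖∫ ξ : E2, ker x ξ * W ξ‖ ≤ ∫ ξ : E2, ‖W ξ‖ := by
  refine (norm_integral_le_integral_norm _).trans (le_of_eq ?_)
  congr 1
  funext ξ
  rw [norm_mul, norm_ker, one_mul]

/-- The fundamental Fubini computation. -/
lemma pairing_gen (g : 𝕊) (hWc : Continuous W) (hWi : Integrable W) :
    ∫ x : E2, (g x : ℂ) * ∫ ξ : E2, ker x ξ * W ξ
      = ∫ ξ : E2, W ξ * ft ⇑g (-ξ) := by
  have hprod : Integrable (Function.uncurry fun x ξ => (g x : ℂ) * (ker x ξ * W ξ))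
      (volume.prod volume) := by
    have h1 : Integrable (fun z : E2 × E2 => ‖g z.1‖ * ‖W z.2‖) (volume.prod volume) :=
      (g.integrable (μ := volume)).norm.mul_prod hWi.norm
    refine h1.mono' ?_ ?_
    · refine Continuous.aestronglyMeasurable ?_
      exact ((Complex.continuous_ofReal.comp g.continuous).comp continuous_fst).mul
        (ker_cont.mul (hWc.comp continuous_snd))
    · filter_upwards with z
      apply le_of_eq
      show ‖(g z.1 : ℂ) * (ker z.1 z.2 * W z.2)‖ = ‖g z.1‖ * ‖W z.2‖
      rw [norm_mul, norm_mul, norm_ker, one_mul, Complex.norm_real]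
  have hswap := MeasureTheory.integral_integral_swap hprod
  calc ∫ x : E2, (g x : ℂ) * ∫ ξ : E2, ker x ξ * W ξ
      = ∫ x : E2, ∫ ξ : E2, (g x : ℂ) * (ker x ξ * W ξ) := by
        congr 1; funext x; rw [integral_const_mul]
    _ = ∫ ξ : E2, ∫ x : E2, (g x : ℂ) * (ker x ξ * W ξ) := hswap
    _ = ∫ ξ : E2, W ξ * ft ⇑g (-ξ) := by
        congr 1; funext ξ
        rw [ft_neg_eq, ← integral_const_mul]
        congr 1; funext x; ring

end W

/- ### Facts about functions satisfying `IsFourierHalfLap` -/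

variable {f : 𝕊} {L : E2 → ℝ}

lemma hl_eq (hL : IsFourierHalfLap ⇑f L) (x : E2) :
    (L x : ℂ) = ((((2 * π)^2)⁻¹ : ℝ) : ℂ) * ∫ ξ : E2, ker x ξ * Kf f ξ := by
  rw [hL x]
  congr 1
  congr 1
  funext ξ
  rw [ker, Kf, mul_comm Complex.I, mul_assoc]

lemma L_re (hL : IsFourierHalfLap ⇑f L) (x : E2) :
    L x = (((((2 * π)^2)⁻¹ : ℝ) : ℂ) * ∫ ξ : E2, ker x ξ * Kf f ξ).re := by
  rw [← hl_eq hL x, Complex.ofReal_re]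

lemma L_cont (hL : IsFourierHalfLap ⇑f L) : Continuous L := by
  have : L = fun x => (((((2 * π)^2)⁻¹ : ℝ) : ℂ) * ∫ ξ : E2, ker x ξ * Kf f ξ).re :=
    funext (L_re hL)
  rw [this]
  exact Complex.continuous_re.comp (continuous_const.mul (intK_cont (Kf_cont f) (Kf_int f)))

lemma L_bound (hL : IsFourierHalfLap ⇑f L) :
    ∃ C : ℝ, ∀ x : E2, |L x| ≤ C := by
  refine ⟨((2 * π)^2)⁻¹ * ∫ ξ : E2, ‖Kf f ξ‖, fun x => ?_⟩
  rw [L_re hL x]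
  refine (Complex.abs_re_le_norm _).trans ?_
  rw [norm_mul, Complex.norm_real, Real.norm_eq_abs,
    _root_.abs_of_nonneg (by positivity : (0:ℝ) ≤ ((2*π)^2)⁻¹)]
  gcongr
  exact intK_bound x

lemma int_bdd_mul (g : 𝕊) {h : E2 → ℝ} (hc : Continuous h) {C : ℝ}
    (hb : ∀ x, |h x| ≤ C) : Integrable fun x : E2 => g x * h x := by
  have h1 : Integrable fun x : E2 => h x * g x :=
    (g.integrable (μ := volume)).bdd_mul hc.aestronglyMeasurable (c := C)
      (Filter.Eventually.of_forall fun x => by rw [Real.norm_eq_abs]; exact hb x)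
  exact h1.congr (Filter.Eventually.of_forall fun x => mul_comm _ _)

/-- The pairing formula (Parseval-type). -/
lemma pairing (hL : IsFourierHalfLap ⇑f L) (g : 𝕊) :
    ((∫ x : E2, g x * L x : ℝ) : ℂ)
      = ((((2 * π)^2)⁻¹ : ℝ) : ℂ) * ∫ ξ : E2, Kf f ξ * ft ⇑g (-ξ) := by
  rw [show ((∫ x : E2, g x * L x : ℝ) : ℂ) = ∫ x : E2, ((g x * L x : ℝ) : ℂ) from
    (integral_ofReal (𝕜 := ℂ)).symm]
  have h1 : (fun x : E2 => ((g x * L x : ℝ) : ℂ))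
      = fun x => ((((2 * π)^2)⁻¹ : ℝ) : ℂ) * ((g x : ℂ) * ∫ ξ : E2, ker x ξ * Kf f ξ) := by
    funext x
    rw [Complex.ofReal_mul, hl_eq hL x]
    ring
  rw [h1, integral_const_mul, pairing_gen g (Kf_cont f) (Kf_int f)]

/-- Self-adjointness of the half-Laplacian. -/
lemma selfadj {g : 𝕊} {Lg : E2 → ℝ} (hf : IsFourierHalfLap ⇑f L)
    (hg : IsFourierHalfLap ⇑g Lg) :
    ∫ x : E2, g x * L x = ∫ x : E2, f x * Lg x := by
  have h1 := pairing hf g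
  have h2 := pairing hg f
  rw [← Complex.ofReal_inj, h1, h2]
  congr 1
  rw [← MeasureTheory.integral_neg_eq_self (fun ξ : E2 => Kf f ξ * ft ⇑g (-ξ)) volume]
  congr 1
  funext ξ
  rw [neg_neg, Kf, Kf, norm_neg]
  ring

/- ### Derivative of the half-Laplacian -/

/-- The pointwise derivative kernel. -/
def Dk (f : 𝕊) (x ξ : E2) : E2 →L[ℝ] ℂ :=
  ((1 : ℝ →L[ℝ] ℝ).smulRight (ker x ξ * Complex.I * Kf f ξ)).comp (innerSL ℝ ξ)

lemma Dk_apply (f : 𝕊) (x ξ v : E2) :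
    Dk f x ξ v = ((⟪ξ, v⟫ : ℝ) : ℂ) * (ker x ξ * Complex.I * Kf f ξ) := by
  simp [Dk, Complex.real_smul]

lemma Dk_norm_le (f : 𝕊) (x ξ : E2) : ‖Dk f x ξ‖ ≤ ‖ξ‖ * ‖Kf f ξ‖ := by
  refine (ContinuousLinearMap.opNorm_comp_le _ _).trans ?_
  have h1 : ‖(1 : ℝ →L[ℝ] ℝ)‖ = 1 := by
    rw [ContinuousLinearMap.one_def, ContinuousLinearMap.norm_id]
  rw [ContinuousLinearMap.norm_smulRight_apply, h1, one_mul, innerSL_apply_norm,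
    norm_mul, norm_mul, norm_ker, Complex.norm_I, one_mul, one_mul, mul_comm]

lemma Dk_cont (f : 𝕊) (x : E2) : Continuous fun ξ => Dk f x ξ := by
  have h1 : Continuous fun ξ : E2 => ker x ξ * Complex.I * Kf f ξ :=
    ((ker_cont_right x).mul continuous_const).mul (Kf_cont f)
  have h2 : Continuous fun ξ : E2 =>
      (1 : ℝ →L[ℝ] ℝ).smulRight (ker x ξ * Complex.I * Kf f ξ) := by
    have heq : (fun ξ : E2 => (1 : ℝ →L[ℝ] ℝ).smulRight (ker x ξ * Complex.I * Kf f ξ))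
        = fun ξ : E2 => (ker x ξ * Complex.I * Kf f ξ) •
            ((1 : ℝ →L[ℝ] ℝ).smulRight (1 : ℂ)) := by
      funext ξ
      refine ContinuousLinearMap.ext fun r => ?_
      simp only [ContinuousLinearMap.smulRight_apply, ContinuousLinearMap.coe_smul',
        Pi.smul_apply, ContinuousLinearMap.one_apply, smul_eq_mul, Complex.real_smul]
      push_cast
      ring
    rw [heq]
    exact h1.smul continuous_const
  exact h2.clm_comp (innerSL ℝ).continuous

lemma Dk_int (f : 𝕊) (x : E2) : Integrable fun ξ => Dk f x ξ :=
  (norm_Kf_int f).mono' (Dk_cont f x).aestronglyMeasurable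
    (Filter.Eventually.of_forall (Dk_norm_le f x))

lemma hasFDeriv_Phi (f : 𝕊) (x : E2) :
    HasFDerivAt (fun y : E2 => ∫ ξ : E2, ker y ξ * Kf f ξ) (∫ ξ : E2, Dk f x ξ) x := by
  refine hasFDerivAt_integral_of_dominated_of_fderiv_le
    (F := fun y ξ => ker y ξ * Kf f ξ) (F' := fun y ξ => Dk f y ξ)
    (bound := fun ξ => ‖ξ‖ * ‖Kf f ξ‖) (s := Metric.ball x 1) (Metric.ball_mem_nhds x one_pos) ?_ ?_ ?_ ?_ (norm_Kf_int f) ?_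
  · filter_upwards with y
    exact ((ker_cont_right y).mul (Kf_cont f)).aestronglyMeasurable
  · refine (Kf_int f).norm.mono' ?_ ?_
    · exact ((ker_cont_right x).mul (Kf_cont f)).aestronglyMeasurable
    · filter_upwards with ξ
      rw [norm_mul, norm_ker, one_mul]
  · exact (Dk_cont f x).aestronglyMeasurable
  · filter_upwards with ξ
    intro y _
    exact Dk_norm_le f y ξ
  · filter_upwards with ξ
    intro y _
    have h0 : HasDerivAt (fun r : ℝ => ((r : ℂ) * Complex.I)) Complex.I (⟪y, ξ⟫ : ℝ) := by
      simpa using (Complex.ofRealCLM.hasDerivAt (x := (⟪y, ξ⟫ : ℝ))).mul_const Complex.I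
    have h1 : HasDerivAt (fun r : ℝ => Complex.exp ((r : ℂ) * Complex.I))
        (Complex.exp (((⟪y, ξ⟫ : ℝ) : ℂ) * Complex.I) * Complex.I) (⟪y, ξ⟫ : ℝ) := by
      simpa [Function.comp_def] using
        (Complex.hasDerivAt_exp (((⟪y, ξ⟫ : ℝ) : ℂ) * Complex.I)).comp (⟪y, ξ⟫ : ℝ) h0
    have h2 := h1.mul_const (Kf f ξ)
    have h3 : HasFDerivAt (fun z : E2 => (⟪z, ξ⟫ : ℝ)) (innerSL ℝ ξ) y := by
      have heq : (fun z : E2 => (⟪z, ξ⟫ : ℝ)) = ⇑(innerSL ℝ ξ) := by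
        funext z
        rw [innerSL_apply_apply]
        exact real_inner_comm ξ z
      rw [heq]
      exact (innerSL ℝ ξ).hasFDerivAt
    have h4 := (h2.hasFDerivAt).comp y h3
    exact h4

set_option maxHeartbeats 400000 in
/-- Representation of the partial derivatives of the half-Laplacian. -/
lemma pd_L_re (hL : IsFourierHalfLap ⇑f L) (i : Fin 2) (x : E2) :
    pd i L x = (((((2 * π)^2)⁻¹ : ℝ) : ℂ) * ∫ ξ : E2, ker x ξ * Wd i f ξ).re := by
  set c : ℂ := ((((2 * π)^2)⁻¹ : ℝ) : ℂ) with hcdef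
  have hPhi := hasFDeriv_Phi f x
  have hc : HasFDerivAt (fun y : E2 => c * ∫ ξ : E2, ker y ξ * Kf f ξ)
      (c • (∫ ξ : E2, Dk f x ξ)) x := hPhi.const_mul c
  have hre : HasFDerivAt (fun y : E2 => (c * ∫ ξ : E2, ker y ξ * Kf f ξ).re)
      (Complex.reCLM.comp (c • (∫ ξ : E2, Dk f x ξ))) x :=
    Complex.reCLM.hasFDerivAt.comp x hc
  have hLfun : L = fun y => (c * ∫ ξ : E2, ker y ξ * Kf f ξ).re := funext (L_re hL)
  have hfd : fderiv ℝ L x = Complex.reCLM.comp (c • (∫ ξ : E2, Dk f x ξ)) := by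
    rw [hLfun]
    exact hre.fderiv
  rw [pd, hfd]
  have happ : (∫ ξ : E2, Dk f x ξ) (EuclideanSpace.single i 1)
      = ∫ ξ : E2, Dk f x ξ (EuclideanSpace.single i 1) :=
    ContinuousLinearMap.integral_apply (Dk_int f x) _
  have h2 : (∫ ξ : E2, Dk f x ξ (EuclideanSpace.single i 1))
      = ∫ ξ : E2, ker x ξ * Wd i f ξ := by
    congr 1
    funext ξ
    rw [Dk_apply, Wd]
    ring
  have h3 : (Complex.reCLM.comp (c • (∫ ξ : E2, Dk f x ξ))) (EuclideanSpace.single i 1)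
      = (c * ((∫ ξ : E2, Dk f x ξ) (EuclideanSpace.single i 1))).re := rfl
  rw [h3, happ, h2]

lemma pd_L_cont (hL : IsFourierHalfLap ⇑f L) (i : Fin 2) :
    Continuous fun x => pd i L x := by
  have h : (fun x => pd i L x)
      = fun x => (((((2 * π)^2)⁻¹ : ℝ) : ℂ) * ∫ ξ : E2, ker x ξ * Wd i f ξ).re :=
    funext (pd_L_re hL i)
  rw [h]
  exact Complex.continuous_re.comp
    (continuous_const.mul (intK_cont (Wd_cont i f) (Wd_int i f)))

lemma pd_L_bound (hL : IsFourierHalfLap ⇑f L) (i : Fin 2) :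
    ∃ C : ℝ, ∀ x : E2, |pd i L x| ≤ C := by
  refine ⟨((2 * π)^2)⁻¹ * ∫ ξ : E2, ‖Wd i f ξ‖, fun x => ?_⟩
  rw [pd_L_re hL i x]
  refine (Complex.abs_re_le_norm _).trans ?_
  rw [norm_mul, Complex.norm_real, Real.norm_eq_abs,
    _root_.abs_of_nonneg (by positivity : (0:ℝ) ≤ ((2*π)^2)⁻¹)]
  gcongr
  exact intK_bound x

/- ### Fourier transform of a partial derivative -/

lemma fderiv_toC (g : 𝕊) (x : E2) :
    fderiv ℝ (⇑(toC g)) x = Complex.ofRealCLM.comp (fderiv ℝ (⇑g) x) := by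
  have h : ⇑(toC g) = (⇑Complex.ofRealCLM) ∘ ⇑g := by
    funext y
    simp
  rw [h, fderiv_comp x Complex.ofRealCLM.differentiableAt g.differentiable.differentiableAt,
    ContinuousLinearMap.fderiv]

lemma ft_pd (g : 𝕊) (i : Fin 2) (ξ : E2) :
    ft ⇑(pdS i g) ξ
      = Complex.I * ((⟪ξ, EuclideanSpace.single i 1⟫ : ℝ) : ℂ) * ft ⇑g ξ := by
  have hint : Integrable ⇑(toC g) := (toC g).integrable
  have hdiff : Differentiable ℝ ⇑(toC g) := (toC g).differentiable
  have hfd : fderiv ℝ ⇑(toC g) = ⇑(SchwartzMap.fderivCLM ℝ E2 ℂ (toC g)) := by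
    funext x
    exact (SchwartzMap.fderivCLM_apply ℝ (toC g) x).symm
  have hint' : Integrable (fderiv ℝ ⇑(toC g)) := by
    rw [hfd]
    exact (SchwartzMap.fderivCLM ℝ E2 ℂ (toC g)).integrable
  have key := Real.fourier_fderiv hint hdiff hint'
  set w : E2 := (2*π)⁻¹ • ξ with hw
  have key2 := congrArg (fun F => F w (EuclideanSpace.single i 1)) key
  have hl : (𝓕 (fderiv ℝ ⇑(toC g)) w) (EuclideanSpace.single i 1)
      = 𝓕 (fun x => fderiv ℝ (⇑(toC g)) x (EuclideanSpace.single i 1)) w :=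
    Real.fourier_continuousLinearMap_apply hint'
  have hl2 : (fun x => fderiv ℝ (⇑(toC g)) x (EuclideanSpace.single i 1))
      = ⇑(toC (pdS i g)) := by
    funext x
    rw [fderiv_toC]
    simp [pd]
  have hr : (VectorFourier.fourierSMulRight (-innerSL ℝ) (𝓕 ⇑(toC g)) w)
        (EuclideanSpace.single i 1)
      = -(2 * π * Complex.I) • ((-(innerSL ℝ)) w (EuclideanSpace.single i 1))
          • 𝓕 ⇑(toC g) w :=
    VectorFourier.fourierSMulRight_apply _ _ _ _
  rw [hl, hl2, hr] at key2
  have hfteq : ft ⇑(pdS i g) ξ = 𝓕 ⇑(toC (pdS i g)) w := by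
    rw [ft_eq, FTc, SchwartzMap.fourierTransformCLM_apply, SchwartzMap.fourier_coe]
  have hft : 𝓕 ⇑(toC g) w = ft ⇑g ξ := by
    rw [ft_eq g ξ, FTc, SchwartzMap.fourierTransformCLM_apply, SchwartzMap.fourier_coe]
  rw [hfteq, key2, hft]
  have hinner : ((-(innerSL ℝ)) w (EuclideanSpace.single i 1))
      = -((2*π)⁻¹ * ⟪ξ, EuclideanSpace.single i 1⟫) := by
    rw [ContinuousLinearMap.neg_apply, ContinuousLinearMap.neg_apply, innerSL_apply_apply, hw,
      real_inner_smul_left]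
  rw [hinner]
  have key3 : ∀ a F : ℂ, -(2 * (π:ℂ) * Complex.I) * (-((2*(π:ℂ))⁻¹ * a) * F)
      = Complex.I * a * F := by
    intro a F
    have hb : (2*(π:ℂ)) ≠ 0 := by
      simp [Complex.ofReal_ne_zero, pi_ne_zero]
    field_simp
  rw [Complex.real_smul, smul_eq_mul]
  push_cast
  linear_combination key3 ((⟪ξ, EuclideanSpace.single i 1⟫ : ℝ) : ℂ) (ft ⇑g ξ)

/- ### Integration by parts against the half-Laplacian -/

lemma ibp (hL : IsFourierHalfLap ⇑f L) (g : 𝕊) (i : Fin 2) :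
    ∫ x : E2, g x * pd i L x = -∫ x : E2, pdS i g x * L x := by
  set c : ℂ := ((((2 * π)^2)⁻¹ : ℝ) : ℂ) with hcdef
  have hJc : Continuous fun x : E2 => ∫ ξ : E2, ker x ξ * Wd i f ξ :=
    intK_cont (Wd_cont i f) (Wd_int i f)
  have hint : Integrable (fun x : E2 => (g x : ℂ) * (c * ∫ ξ : E2, ker x ξ * Wd i f ξ)) := by
    have hgint : Integrable (fun x : E2 => (g x : ℂ)) :=
      ((toC g).integrable (μ := volume)).congr
        (Filter.Eventually.of_forall fun x => toC_apply g x)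
    have h1 : Integrable (fun x : E2 =>
        (c * ∫ ξ : E2, ker x ξ * Wd i f ξ) * (g x : ℂ)) := by
      refine hgint.bdd_mul ((continuous_const.mul hJc).aestronglyMeasurable)
        (c := ‖c‖ * ∫ ξ : E2, ‖Wd i f ξ‖) (Filter.Eventually.of_forall fun x => ?_)
      rw [norm_mul]
      gcongr
      exact intK_bound x
    exact h1.congr (Filter.Eventually.of_forall fun x => mul_comm _ _)
  have h1 : ∫ x : E2, g x * pd i L x
      = (∫ x : E2, (g x : ℂ) * (c * ∫ ξ : E2, ker x ξ * Wd i f ξ)).re := by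
    have hcc := Complex.reCLM.integral_comp_comm hint
    calc ∫ x : E2, g x * pd i L x
        = ∫ x : E2, Complex.reCLM ((g x : ℂ) * (c * ∫ ξ : E2, ker x ξ * Wd i f ξ)) := by
          congr 1
          funext x
          rw [Complex.reCLM_apply, pd_L_re hL i x]
          exact (Complex.re_ofReal_mul (g x) _).symm
      _ = (∫ x : E2, (g x : ℂ) * (c * ∫ ξ : E2, ker x ξ * Wd i f ξ)).re := by
          rw [hcc, Complex.reCLM_apply]
  have h2 : (∫ x : E2, (g x : ℂ) * (c * ∫ ξ : E2, ker x ξ * Wd i f ξ))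
      = c * ∫ ξ : E2, Wd i f ξ * ft ⇑g (-ξ) := by
    rw [← pairing_gen g (Wd_cont i f) (Wd_int i f), ← integral_const_mul]
    congr 1
    funext x
    ring
  have h3 : (fun ξ : E2 => Kf f ξ * ft ⇑(pdS i g) (-ξ))
      = fun ξ : E2 => -(Wd i f ξ * ft ⇑g (-ξ)) := by
    funext ξ
    rw [ft_pd g i (-ξ)]
    simp only [Kf, Wd, inner_neg_left, norm_neg]
    push_cast
    ring
  have h4 := pairing hL (pdS i g)
  rw [h3, integral_neg] at h4
  have h5 : ((∫ x : E2, pdS i g x * L x : ℝ) : ℂ)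
      = -(c * ∫ ξ : E2, Wd i f ξ * ft ⇑g (-ξ)) := by
    rw [h4]
    ring
  have h6 := congrArg Complex.re h5
  rw [Complex.ofReal_re] at h6
  rw [h1, h2, h6, Complex.neg_re, neg_neg]

/- ### Second derivatives commute for Schwartz functions -/

lemma pd_mul (f g : 𝕊) (i : Fin 2) (x : E2) :
    pd i (fun y => f y * g y) x = pd i (⇑f) x * g x + f x * pd i (⇑g) x := by
  unfold pd
  rw [fderiv_fun_mul f.differentiable.differentiableAt g.differentiable.differentiableAt]
  simp only [ContinuousLinearMap.add_apply, ContinuousLinearMap.coe_smul', Pi.smul_apply,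
    smul_eq_mul]
  ring

lemma pd_mulS (f g : 𝕊) (i : Fin 2) (x : E2) :
    pd i (⇑(mulS f g)) x = pd i (⇑f) x * g x + f x * pd i (⇑g) x := by
  have h : ⇑(mulS f g) = fun y => f y * g y := rfl
  rw [h]
  exact pd_mul f g i x

lemma pd_comm (f : 𝕊) (x : E2) :
    pd 0 (⇑(pdS 1 f)) x = pd 1 (⇑(pdS 0 f)) x := by
  have hdiff : Differentiable ℝ (fderiv ℝ ⇑f) := by
    have h := (contDiff_infty_iff_fderiv.mp f.smooth').2
    exact h.differentiable (by simp)
  have key : ∀ i j : Fin 2, pd i (⇑(pdS j f)) x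
      = fderiv ℝ (fderiv ℝ ⇑f) x (EuclideanSpace.single i 1) (EuclideanSpace.single j 1) := by
    intro i j
    have heq : (⇑(pdS j f)) = fun y => fderiv ℝ (⇑f) y (EuclideanSpace.single j 1) := rfl
    rw [pd, heq, fderiv_clm_apply hdiff.differentiableAt (differentiableAt_const _)]
    simp
  rw [key 0 1, key 1 0]
  have h2 : (2 : WithTop ℕ∞) ≤ ((⊤:ℕ∞) : WithTop ℕ∞) := by
    have h1 : ((2:ℕ∞) : WithTop ℕ∞) = (2 : WithTop ℕ∞) := by norm_cast
    rw [← h1]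
    exact_mod_cast (le_top : (2:ℕ∞) ≤ ⊤)
  exact (f.smooth'.contDiffAt.isSymmSndFDerivAt
    (by rw [minSmoothness_of_isRCLikeNormedField]; exact h2)) _ _

end Resnick

open Resnick

/-- Resnick's commutator representation of the SQG nonlinear flux: for Schwartz
`ψ, φ` and `u = ∇^⊥ψ`,
`2∫ (Λψ)(u·∇φ) dx = ∫ ψ [Λ(∇φ·u) − ∇φ·(∇^⊥Λψ)] dx`,
i.e. `(θ R^⊥θ, ∇φ) = ½∫ (Λ⁻¹θ)[Λ,∇φ]·R^⊥θ dx` with `θ = Λψ`. -/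
theorem stmt9 (ψ φ : SchwartzMap E2 ℝ) (Λψ Λw : E2 → ℝ)
    (hΛψsmooth : ContDiff ℝ (⊤ : ℕ∞) Λψ)
    (hΛψ : IsFourierHalfLap (⇑ψ) Λψ)
    (hΛw : IsFourierHalfLap
      (fun x => ∑ i : Fin 2, pd i (⇑φ) x * gradPerp (⇑ψ) x i) Λw) :
    2 * ∫ x : E2, Λψ x * (∑ i : Fin 2, gradPerp (⇑ψ) x i * pd i (⇑φ) x)
      = ∫ x : E2, ψ x * (Λw x - ∑ i : Fin 2, pd i (⇑φ) x * gradPerp Λψ x i) := by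
  classical
  set w' : SchwartzMap E2 ℝ := mulS (pdS 1 φ) (pdS 0 ψ) - mulS (pdS 0 φ) (pdS 1 ψ) with hw'
  have hwfun : (fun x => ∑ i : Fin 2, pd i (⇑φ) x * gradPerp (⇑ψ) x i) = ⇑w' := by
    funext x
    simp [hw', Fin.sum_univ_two, gradPerp, SchwartzMap.sub_apply]
    ring
  rw [hwfun] at hΛw
  obtain ⟨C0, hC0⟩ := L_bound hΛw
  obtain ⟨C1, hC1⟩ := pd_L_bound hΛψ 0
  obtain ⟨C2, hC2⟩ := pd_L_bound hΛψ 1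
  have hΛwc := L_cont hΛw
  have hΛψc := L_cont hΛψ
  have hpd0c := pd_L_cont hΛψ 0
  have hpd1c := pd_L_cont hΛψ 1
  have hI1 : Integrable (fun x : E2 => ψ x * Λw x) := int_bdd_mul ψ hΛwc hC0
  have hI2 : Integrable (fun x : E2 => (mulS ψ (pdS 0 φ)) x * pd 1 Λψ x) :=
    int_bdd_mul (mulS ψ (pdS 0 φ)) hpd1c hC2
  have hI3 : Integrable (fun x : E2 => (mulS ψ (pdS 1 φ)) x * pd 0 Λψ x) :=
    int_bdd_mul (mulS ψ (pdS 1 φ)) hpd0c hC1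
  have split : (fun x : E2 => ψ x * (Λw x - ∑ i : Fin 2, pd i (⇑φ) x * gradPerp Λψ x i))
      = fun x : E2 => (ψ x * Λw x)
          + (((mulS ψ (pdS 0 φ)) x * pd 1 Λψ x) - ((mulS ψ (pdS 1 φ)) x * pd 0 Λψ x)) := by
    funext x
    simp [Fin.sum_univ_two, gradPerp]
    ring
  have hI23 : Integrable (fun x : E2 =>
      (mulS ψ (pdS 0 φ)) x * pd 1 Λψ x - (mulS ψ (pdS 1 φ)) x * pd 0 Λψ x) := hI2.sub hI3
  rw [split, integral_add hI1 hI23, integral_sub hI2 hI3]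
  have e1 : ∫ x : E2, ψ x * Λw x = ∫ x : E2, w' x * Λψ x := selfadj hΛw hΛψ
  have e2 : ∫ x : E2, (mulS ψ (pdS 0 φ)) x * pd 1 Λψ x
      = -∫ x : E2, pdS 1 (mulS ψ (pdS 0 φ)) x * Λψ x := ibp hΛψ (mulS ψ (pdS 0 φ)) 1
  have e3 : ∫ x : E2, (mulS ψ (pdS 1 φ)) x * pd 0 Λψ x
      = -∫ x : E2, pdS 0 (mulS ψ (pdS 1 φ)) x * Λψ x := ibp hΛψ (mulS ψ (pdS 1 φ)) 0
  rw [e1, e2, e3]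
  obtain ⟨Cψ, hCψ⟩ := L_bound hΛψ
  have hIw : Integrable (fun x : E2 => w' x * Λψ x) := int_bdd_mul w' hΛψc hCψ
  have hIA : Integrable (fun x : E2 => pdS 1 (mulS ψ (pdS 0 φ)) x * Λψ x) :=
    int_bdd_mul _ hΛψc hCψ
  have hIB : Integrable (fun x : E2 => pdS 0 (mulS ψ (pdS 1 φ)) x * Λψ x) :=
    int_bdd_mul _ hΛψc hCψ
  have hcomb : (∫ x : E2, w' x * Λψ x)
        + (-(∫ x : E2, pdS 1 (mulS ψ (pdS 0 φ)) x * Λψ x)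
            - -(∫ x : E2, pdS 0 (mulS ψ (pdS 1 φ)) x * Λψ x))
      = ∫ x : E2, (w' x * Λψ x - pdS 1 (mulS ψ (pdS 0 φ)) x * Λψ x)
          + pdS 0 (mulS ψ (pdS 1 φ)) x * Λψ x := by
    have hIwA : Integrable (fun x : E2 =>
        w' x * Λψ x - pdS 1 (mulS ψ (pdS 0 φ)) x * Λψ x) := hIw.sub hIA
    rw [integral_add hIwA hIB, integral_sub hIw hIA]
    ring
  rw [hcomb]
  have hpt : (fun x : E2 => (w' x * Λψ x - pdS 1 (mulS ψ (pdS 0 φ)) x * Λψ x)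
          + pdS 0 (mulS ψ (pdS 1 φ)) x * Λψ x)
      = fun x : E2 => 2 * (Λψ x * (∑ i : Fin 2, gradPerp (⇑ψ) x i * pd i (⇑φ) x)) := by
    funext x
    have hA := pd_mulS ψ (pdS 0 φ) 1 x
    have hB := pd_mulS ψ (pdS 1 φ) 0 x
    have hcm := pd_comm φ x
    rw [hw']
    simp only [SchwartzMap.sub_apply, mulS_apply, pdS_apply] at *
    rw [hA, hB, hcm]
    simp only [Fin.sum_univ_two, gradPerp, Matrix.cons_val_zero, Matrix.cons_val_one,
      Matrix.head_cons]
    ring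
  rw [hpt, integral_const_mul]
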